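/- Let p(z) = z^m - a_1 z^{m-1} - a_2 z^{m-2} - ... - a_{m-1} z - a_m be a polynomial with nonnegative real coefficients a_1,...,a_m. Then every (complex) root of p has modulus strictly less than 1 if and only if p(1) > 0. -/

import Mathlib

/-- A monic polynomial `p(z) = z^m - ∑_{i=1}^m a_i z^{m-i}` with
nonnegative real coefficients `a_i` has all complex roots of modulus `< 1`
iff `p(1) = 1 - ∑ a_i > 0`. -/
theorem roots_in_unit_disc_iff (m : ℕ) (hm : 0 < m) (a : Fin m → ℝ)
    (ha : ∀ i, 0 ≤ a i)
    (p : ℂ → ℂ)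
    (hp : ∀ z : ℂ, p z = z ^ m - ∑ i : Fin m, (a i : ℂ) * z ^ (m - 1 - (i : ℕ))) :
    (∀ z : ℂ, p z = 0 → ‖z‖ < 1) ↔ 0 < 1 - ∑ i : Fin m, a i := by
  set S := ∑ i : Fin m, a i with hSdef
  have hS0 : 0 ≤ S := Finset.sum_nonneg fun i _ => ha i
  constructor
  · intro hroots
    by_contra h
    push_neg at h
    have hS1 : 1 ≤ S := by linarith
    set f : ℝ → ℝ := fun x => x ^ m - ∑ i : Fin m, a i * x ^ (m - 1 - (i : ℕ)) with hf
    have hcont : ContinuousOn f (Set.Icc (1:ℝ) (S + 1)) := by fun_prop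
    have hf1 : f 1 ≤ 0 := by
      simp only [hf, one_pow, mul_one]
      linarith
    have hfR : 0 ≤ f (S + 1) := by
      have hx1 : (1:ℝ) ≤ S + 1 := by linarith
      have hsum : ∑ i : Fin m, a i * (S + 1) ^ (m - 1 - (i : ℕ))
          ≤ ∑ i : Fin m, a i * (S + 1) ^ (m - 1) := by
        apply Finset.sum_le_sum
        intro i _
        exact mul_le_mul_of_nonneg_left
          (pow_le_pow_right₀ hx1 (Nat.sub_le _ _)) (ha i)
      have hsum2 : ∑ i : Fin m, a i * (S + 1) ^ (m - 1) = S * (S + 1) ^ (m - 1) := by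
        rw [← Finset.sum_mul]
      have hpow : (S + 1) ^ m = (S + 1) ^ (m - 1) * (S + 1) := by
        rw [← pow_succ, Nat.sub_add_cancel hm]
      have hppos : 0 < (S + 1) ^ (m - 1) := pow_pos (by linarith) _
      simp only [hf]
      rw [hpow]
      nlinarith
    obtain ⟨c, hc, hfc⟩ := intermediate_value_Icc (by linarith : (1:ℝ) ≤ S + 1)
      hcont ⟨hf1, hfR⟩
    have hpc : p (c : ℂ) = 0 := by
      rw [hp]
      have : ((f c : ℝ) : ℂ) = (c : ℂ) ^ m - ∑ i : Fin m, (a i : ℂ) * (c : ℂ) ^ (m - 1 - (i : ℕ)) := by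
        simp only [hf]
        push_cast
        ring
      rw [← this, hfc, Complex.ofReal_zero]
    have hlt := hroots _ hpc
    rw [Complex.norm_real, Real.norm_eq_abs] at hlt
    have : (1:ℝ) ≤ c := hc.1
    rw [abs_of_nonneg (by linarith)] at hlt
    linarith
  · intro h z hz
    by_contra habs
    push_neg at habs
    have hz1 : 1 ≤ ‖z‖ := habs
    rw [hp z, sub_eq_zero] at hz
    have h1 : ‖z‖ ^ m ≤ ∑ i : Fin m, a i * ‖z‖ ^ (m - 1 - (i : ℕ)) := by
      rw [← norm_pow, hz]
      refine le_trans (norm_sum_le _ _) ?_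
      apply Finset.sum_le_sum
      intro i _
      rw [norm_mul, norm_pow, Complex.norm_real, Real.norm_eq_abs, abs_of_nonneg (ha i)]
    have h2 : ∑ i : Fin m, a i * ‖z‖ ^ (m - 1 - (i : ℕ))
        ≤ S * ‖z‖ ^ (m - 1) := by
      rw [hSdef, Finset.sum_mul]
      apply Finset.sum_le_sum
      intro i _
      exact mul_le_mul_of_nonneg_left (pow_le_pow_right₀ hz1 (Nat.sub_le _ _)) (ha i)
    have hppos : 0 < ‖z‖ ^ (m - 1) := pow_pos (by linarith) _
    have h3 : S * ‖z‖ ^ (m - 1) < ‖z‖ ^ (m - 1) := by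
      nlinarith
    have h4 : ‖z‖ ^ (m - 1) ≤ ‖z‖ ^ m :=
      pow_le_pow_right₀ hz1 (Nat.sub_le _ _)
    linarith
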